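/- In a separated weak Büchi game, the system's winning region is a union of strongly connected components of the product game graph: if (i,o) is in the winning region and (î,ô) lies in the same SCC of the product graph, then (î,ô) is in the winning region. -/

import Mathlib

open scoped Classical

/-- Reachability: reflexive-transitive closure of the edge relation. -/
def Reach {V : Type*} (E : V → V → Prop) : V → V → Prop := Relation.ReflTransGen E

/-- Two vertices lie in the same strongly connected component: mutual reachability. -/
def SameSCC {V : Type*} (E : V → V → Prop) (s t : V) : Prop := Reach E s t ∧ Reach E t s

/-- Edge relation of the product of two directed graphs (componentwise). -/
def prodEdge {I O : Type*} (EI : I → I → Prop) (EO : O → O → Prop) :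
    I × O → I × O → Prop := fun p q => EI p.1 q.1 ∧ EO p.2 q.2

/-- A system strategy: given the history of states so far and the new environment
input, choose the new output. -/
abbrev Strat (I O : Type*) := List (I × O) → I → O

/-- The history (prefix) of a play up to and including position `n`. -/
def hist {I O : Type*} (π : ℕ → I × O) (n : ℕ) : List (I × O) := (List.range (n + 1)).map π

/-- A play is consistent with system strategy `f` from state `s`. -/
def Consistent {I O : Type*} (f : Strat I O) (s : I × O) (π : ℕ → I × O) : Prop :=
  π 0 = s ∧ ∀ n, (π (n + 1)).2 = f (hist π n) (π (n + 1)).1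

/-- All environment moves along the play are edges of the input graph. -/
def EnvLegal {I O : Type*} (EI : I → I → Prop) (π : ℕ → I × O) : Prop :=
  ∀ n, EI (π n).1 (π (n + 1)).1

/-- All system moves along the play are edges of the output graph. -/
def SysLegal {I O : Type*} (EO : O → O → Prop) (π : ℕ → I × O) : Prop :=
  ∀ n, EO (π n).2 (π (n + 1)).2

/-- The play satisfies `P` infinitely often. -/
def InfOften {V : Type*} (P : V → Prop) (π : ℕ → V) : Prop := ∀ N, ∃ n, N ≤ n ∧ P (π n)

/-- `f` is a winning system strategy for the Büchi condition `GF acc` from `s`: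
every play from `s` consistent with `f` in which the environment moves legally has
legal system moves and visits `acc` infinitely often. -/
def WinningFrom {I O : Type*} (EI : I → I → Prop) (EO : O → O → Prop)
    (acc : I × O → Prop) (f : Strat I O) (s : I × O) : Prop :=
  ∀ π : ℕ → I × O, Consistent f s π → EnvLegal EI π →
    SysLegal EO π ∧ InfOften acc π

/-- The system can win the weak Büchi game `GF acc` from `s`. -/
def SysWins {I O : Type*} (EI : I → I → Prop) (EO : O → O → Prop)
    (acc : I × O → Prop) (s : I × O) : Prop := ∃ f, WinningFrom EI EO acc f s

/-- Projection onto the inputs of the SCC (of the product graph) containing `s`. -/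
def sccProjI {I O : Type*} (EI : I → I → Prop) (EO : O → O → Prop) (s : I × O) : Set I :=
  {i' | ∃ o', SameSCC (prodEdge EI EO) s (i', o')}

/-- Projection onto the outputs of the SCC (of the product graph) containing `s`. -/
def sccProjO {I O : Type*} (EI : I → I → Prop) (EO : O → O → Prop) (s : I × O) : Set O :=
  {o' | ∃ i', SameSCC (prodEdge EI EO) s (i', o')}

/-! ### Length-indexed paths -/

/-- A path of length `L` from `a` to `b`. -/
def PathN {V : Type*} (E : V → V → Prop) (L : ℕ) (a b : V) : Prop :=
  ∃ p : ℕ → V, p 0 = a ∧ p L = b ∧ ∀ j < L, E (p j) (p (j + 1))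

section Paths
variable {V : Type*} {E : V → V → Prop}

lemma pathN_refl (E : V → V → Prop) (a : V) : PathN E 0 a a :=
  ⟨fun _ => a, rfl, rfl, fun j hj => absurd hj (Nat.not_lt_zero j)⟩

lemma reach_of_pathN : ∀ {L : ℕ} {a b : V}, PathN E L a b → Reach E a b := by
  intro L
  induction L with
  | zero =>
    rintro a b ⟨p, h0, hL, _⟩
    rw [← h0, ← hL]
    exact Relation.ReflTransGen.refl
  | succ n ih =>
    rintro a b ⟨p, h0, hL, he⟩
    have h1 : Reach E (p 1) b := ih ⟨fun j => p (j + 1), rfl, hL, fun j hj => he (j + 1) (by omega)⟩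
    have h2 := he 0 (by omega)
    rw [h0] at h2
    exact Relation.ReflTransGen.head h2 h1

lemma pathN_of_reach {a b : V} (h : Reach E a b) : ∃ L, PathN E L a b := by
  induction h with
  | refl => exact ⟨0, pathN_refl E a⟩
  | @tail b c _ e ih =>
    obtain ⟨L, p, h0, hL, he⟩ := ih
    refine ⟨L + 1, fun j => if j = L + 1 then c else p j, ?_, ?_, ?_⟩
    · simp only [if_neg (by omega : ¬ (0 : ℕ) = L + 1)]; exact h0
    · simp
    · intro j hj
      by_cases hjL : j = L
      · subst hjL
        simp only [if_neg (by omega : ¬ j = j + 1), if_pos rfl, hL]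
        exact e
      · simp only [if_neg (by omega : ¬ j = L + 1), if_neg (by omega : ¬ j + 1 = L + 1)]
        exact he j (by omega)

lemma pathN_trans {L L' : ℕ} {a b c : V} (h1 : PathN E L a b) (h2 : PathN E L' b c) :
    PathN E (L + L') a c := by
  obtain ⟨p, p0, pL, pe⟩ := h1
  obtain ⟨q, q0, qL, qe⟩ := h2
  refine ⟨fun j => if j ≤ L then p j else q (j - L), ?_, ?_, ?_⟩
  · show (if 0 ≤ L then p 0 else q (0 - L)) = a
    simp only [if_pos (Nat.zero_le L)]; exact p0
  · show (if L + L' ≤ L then p (L + L') else q (L + L' - L)) = c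
    by_cases h : L + L' ≤ L
    · have hL' : L' = 0 := by omega
      subst hL'
      simp only [if_pos h]
      rw [Nat.add_zero, pL, ← q0, qL]
    · rw [if_neg h, Nat.add_sub_cancel_left]; exact qL
  · intro j hj
    show E (if j ≤ L then p j else q (j - L)) (if j + 1 ≤ L then p (j + 1) else q (j + 1 - L))
    by_cases hja : j + 1 ≤ L
    · rw [if_pos (by omega : j ≤ L), if_pos hja]
      exact pe j (by omega)
    · by_cases hjb : j ≤ L
      · have hjL : j = L := by omega
        subst hjL
        rw [if_pos le_rfl, if_neg hja, pL]
        have h0 : j + 1 - j = 1 := by omega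
        rw [h0, ← q0]
        exact qe 0 (by omega)
      · rw [if_neg hjb, if_neg hja]
        have heq : j + 1 - L = (j - L) + 1 := by omega
        rw [heq]
        exact qe (j - L) (by omega)

lemma pathN_iterate {L : ℕ} {a : V} (h : PathN E L a a) : ∀ k, PathN E (k * L) a a
  | 0 => by rw [Nat.zero_mul]; exact pathN_refl E a
  | (k + 1) => by rw [Nat.succ_mul]; exact pathN_trans (pathN_iterate h k) h

lemma exists_walk {c : ℕ} (hc : 0 < c) {b : V} (h : PathN E c b b) :
    ∃ P : ℕ → V, (∀ k, P (k * c) = b) ∧ ∀ j, E (P j) (P (j + 1)) := by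
  obtain ⟨p, p0, pc, pe⟩ := h
  have hx : ∀ x, x < c → p ((x + 1) % c) = p (x + 1) := by
    intro x hxc
    rcases eq_or_lt_of_le (Nat.succ_le_of_lt hxc) with h | h
    · rw [Nat.succ_eq_add_one] at h
      rw [h, Nat.mod_self, p0, pc]
    · rw [Nat.mod_eq_of_lt h]
  refine ⟨fun j => p (j % c), ?_, ?_⟩
  · intro k
    show p (k * c % c) = b
    rw [Nat.mul_mod_left]; exact p0
  · intro j
    have hlt : j % c < c := Nat.mod_lt j hc
    have key : p ((j + 1) % c) = p (j % c + 1) := by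
      rw [← Nat.mod_add_mod]
      exact hx (j % c) hlt
    show E (p (j % c)) (p ((j + 1) % c))
    rw [key]
    exact pe (j % c) hlt

lemma pathN_of_walk {P : ℕ → V} (hP : ∀ j, E (P j) (P (j + 1))) {L L' : ℕ} (h : L ≤ L') :
    PathN E (L' - L) (P L) (P L') :=
  ⟨fun j => P (L + j), by show P (L + 0) = P L; rw [Nat.add_zero],
    by show P (L + (L' - L)) = P L'; rw [Nat.add_sub_cancel' h], fun j _ => hP (L + j)⟩

end Paths

section ProdPaths
variable {I O : Type*} {EI : I → I → Prop} {EO : O → O → Prop}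

lemma pathN_fst {L : ℕ} {a b : I × O} (h : PathN (prodEdge EI EO) L a b) :
    PathN EI L a.1 b.1 := by
  obtain ⟨p, p0, pL, pe⟩ := h
  exact ⟨fun j => (p j).1, by show (p 0).1 = a.1; rw [p0],
    by show (p L).1 = b.1; rw [pL], fun j hj => (pe j hj).1⟩

lemma pathN_snd {L : ℕ} {a b : I × O} (h : PathN (prodEdge EI EO) L a b) :
    PathN EO L a.2 b.2 := by
  obtain ⟨p, p0, pL, pe⟩ := h
  exact ⟨fun j => (p j).2, by show (p 0).2 = a.2; rw [p0],
    by show (p L).2 = b.2; rw [pL], fun j hj => (pe j hj).2⟩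

lemma pathN_zip {L : ℕ} {a a' : I} {b b' : O} (h1 : PathN EI L a a') (h2 : PathN EO L b b') :
    PathN (prodEdge EI EO) L (a, b) (a', b') := by
  obtain ⟨p, p0, pL, pe⟩ := h1
  obtain ⟨q, q0, qL, qe⟩ := h2
  exact ⟨fun j => (p j, q j), by show (p 0, q 0) = (a, b); rw [p0, q0],
    by show (p L, q L) = (a', b'); rw [pL, qL], fun j hj => ⟨pe j hj, qe j hj⟩⟩

lemma reach_fst {p q : I × O} (h : Reach (prodEdge EI EO) p q) : Reach EI p.1 q.1 := by
  induction h with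
  | refl => exact Relation.ReflTransGen.refl
  | tail _ e ih => exact Relation.ReflTransGen.tail ih e.1

lemma reach_snd {p q : I × O} (h : Reach (prodEdge EI EO) p q) : Reach EO p.2 q.2 := by
  induction h with
  | refl => exact Relation.ReflTransGen.refl
  | tail _ e ih => exact Relation.ReflTransGen.tail ih e.2

lemma cycle_arith {c' L L2 : ℕ} : (L + L2) * (c' + 1) - L = L2 + c' * (L + L2) := by
  have h : (L + L2) * (c' + 1) = (L + L2) * c' + (L + L2) := by ring
  have h2 : c' * (L + L2) = (L + L2) * c' := Nat.mul_comm _ _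
  omega

lemma key_I {a a' : I} {b : O} {c L L2 : ℕ}
    (hc : 0 < c) (cyc : PathN (prodEdge EI EO) c (a, b) (a, b))
    (h1 : PathN EI L a a') (h2 : PathN EI L2 a' a) :
    ∃ o', SameSCC (prodEdge EI EO) (a, b) (a', o') := by
  obtain ⟨P, hPb, hPe⟩ := exists_walk hc (pathN_snd cyc)
  have hP0 : P 0 = b := by have := hPb 0; rwa [Nat.zero_mul] at this
  refine ⟨P L, ?_, ?_⟩
  · apply reach_of_pathN (L := L)
    have hEO : PathN EO L b (P L) := by
      have := pathN_of_walk hPe (Nat.zero_le L)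
      rwa [Nat.sub_zero, hP0] at this
    exact pathN_zip h1 hEO
  · obtain ⟨c', rfl⟩ : ∃ c', c = c' + 1 := ⟨c - 1, by omega⟩
    apply reach_of_pathN (L := L2 + c' * (L + L2))
    have hEI : PathN EI (L2 + c' * (L + L2)) a' a :=
      pathN_trans h2 (pathN_iterate (pathN_trans h1 h2) c')
    have hle : L ≤ (L + L2) * (c' + 1) := by
      have := Nat.le_mul_of_pos_right (L + L2) (by omega : 0 < c' + 1)
      omega
    have hEO : PathN EO ((L + L2) * (c' + 1) - L) (P L) b := by
      have := pathN_of_walk hPe hle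
      rwa [hPb (L + L2)] at this
    rw [cycle_arith] at hEO
    exact pathN_zip hEI hEO

lemma key_O {a : I} {b b' : O} {c L L2 : ℕ}
    (hc : 0 < c) (cyc : PathN (prodEdge EI EO) c (a, b) (a, b))
    (h1 : PathN EO L b b') (h2 : PathN EO L2 b' b) :
    ∃ i', SameSCC (prodEdge EI EO) (a, b) (i', b') := by
  obtain ⟨P, hPa, hPe⟩ := exists_walk hc (pathN_fst cyc)
  have hP0 : P 0 = a := by have := hPa 0; rwa [Nat.zero_mul] at this
  refine ⟨P L, ?_, ?_⟩
  · apply reach_of_pathN (L := L)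
    have hEI : PathN EI L a (P L) := by
      have := pathN_of_walk hPe (Nat.zero_le L)
      rwa [Nat.sub_zero, hP0] at this
    exact pathN_zip hEI h1
  · obtain ⟨c', rfl⟩ : ∃ c', c = c' + 1 := ⟨c - 1, by omega⟩
    apply reach_of_pathN (L := L2 + c' * (L + L2))
    have hEO : PathN EO (L2 + c' * (L + L2)) b' b :=
      pathN_trans h2 (pathN_iterate (pathN_trans h1 h2) c')
    have hle : L ≤ (L + L2) * (c' + 1) := by
      have := Nat.le_mul_of_pos_right (L + L2) (by omega : 0 < c' + 1)
      omega
    have hEI : PathN EI ((L + L2) * (c' + 1) - L) (P L) a := by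
      have := pathN_of_walk hPe hle
      rwa [hPa (L + L2)] at this
    rw [cycle_arith] at hEI
    exact pathN_zip hEI hEO

lemma sccProjI_eq {s : I × O} {c : ℕ} (hc : 0 < c)
    (cyc : PathN (prodEdge EI EO) c s s) :
    sccProjI EI EO s = {a' | Reach EI s.1 a' ∧ Reach EI a' s.1} := by
  obtain ⟨a, b⟩ := s
  ext a'
  constructor
  · rintro ⟨o', h1, h2⟩
    exact ⟨reach_fst h1, reach_fst h2⟩
  · rintro ⟨r1, r2⟩
    obtain ⟨L, h1⟩ := pathN_of_reach r1
    obtain ⟨L2, h2⟩ := pathN_of_reach r2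
    exact key_I hc cyc h1 h2

lemma sccProjO_eq {s : I × O} {c : ℕ} (hc : 0 < c)
    (cyc : PathN (prodEdge EI EO) c s s) :
    sccProjO EI EO s = {b' | Reach EO s.2 b' ∧ Reach EO b' s.2} := by
  obtain ⟨a, b⟩ := s
  ext b'
  constructor
  · rintro ⟨i', h1, h2⟩
    exact ⟨reach_snd h1, reach_snd h2⟩
  · rintro ⟨r1, r2⟩
    obtain ⟨L, h1⟩ := pathN_of_reach r1
    obtain ⟨L2, h2⟩ := pathN_of_reach r2
    exact key_O hc cyc h1 h2

end ProdPaths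

section Misc
variable {V : Type*} {E : V → V → Prop}

lemma reach_of_chain {g : ℕ → V} (hg : ∀ n, E (g n) (g (n + 1))) {j j' : ℕ} (h : j ≤ j') :
    Reach E (g j) (g j') := by
  induction h with
  | refl => exact Relation.ReflTransGen.refl
  | step h ih => exact Relation.ReflTransGen.tail ih (hg _)

lemma exists_persistent_fiber {β : Type*} [Finite β] (F : ℕ → β) (S : Set ℕ)
    (hS : ∀ N, ∃ k, N ≤ k ∧ k ∈ S) :
    ∃ y, ∀ N, ∃ k, N ≤ k ∧ k ∈ S ∧ F k = y := by
  by_contra h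
  push_neg at h
  choose N hN using h
  cases nonempty_fintype β
  obtain ⟨k, hk, hkS⟩ := hS (Finset.univ.sup N)
  exact hN (F k) k (le_trans (Finset.le_sup (Finset.mem_univ _)) hk) hkS rfl

end Misc

/-! ### Simulation machinery -/

section Sim
variable {I O : Type*} (f : Strat I O) (o0 : O) (x x' : ℕ → I)

def simHist : ℕ → List (I × O)
  | 0 => [(x 0, o0)]
  | n + 1 => simHist n ++ [(x (n + 1), f (simHist n) (x (n + 1)))]

def simPlay (n : ℕ) : I × O := (simHist f o0 x n).getLastD (x 0, o0)

variable {f o0 x x'}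

lemma simPlay_zero : simPlay f o0 x 0 = (x 0, o0) := rfl

lemma simPlay_succ (n : ℕ) :
    simPlay f o0 x (n + 1) = (x (n + 1), f (simHist f o0 x n) (x (n + 1))) := by
  simp [simPlay, simHist, List.getLastD_concat]

lemma simPlay_fst (n : ℕ) : (simPlay f o0 x n).1 = x n := by
  cases n with
  | zero => rfl
  | succ n => rw [simPlay_succ]

lemma hist_zero (π : ℕ → I × O) : hist π 0 = [π 0] := by simp [hist, List.range_succ]

lemma hist_succ (π : ℕ → I × O) (n : ℕ) : hist π (n + 1) = hist π n ++ [π (n + 1)] := by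
  simp [hist, List.range_succ]

lemma hist_length (π : ℕ → I × O) (n : ℕ) : (hist π n).length = n + 1 := by simp [hist]

lemma hist_simPlay (n : ℕ) : hist (simPlay f o0 x) n = simHist f o0 x n := by
  induction n with
  | zero => rw [hist_zero, simPlay_zero]; rfl
  | succ n ih => rw [hist_succ, ih, simPlay_succ]; rfl

lemma simHist_congr {n : ℕ} (h : ∀ k ≤ n, x k = x' k) :
    simHist f o0 x n = simHist f o0 x' n := by
  induction n with
  | zero => simp [simHist, h 0 le_rfl]
  | succ n ih =>
    have hih := ih (fun k hk => h k (le_trans hk (Nat.le_succ n)))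
    simp [simHist, hih, h (n + 1) le_rfl]

lemma simPlay_congr {n : ℕ} (h : ∀ k ≤ n, x k = x' k) :
    simPlay f o0 x n = simPlay f o0 x' n := by
  unfold simPlay
  rw [simHist_congr h, h 0 (Nat.zero_le n)]

lemma simPlay_consistent : Consistent f (x 0, o0) (simPlay f o0 x) :=
  ⟨simPlay_zero, fun n => by simp [simPlay_succ, hist_simPlay]⟩

end Sim

def dseq {I : Type*} (m : ℕ) (r : ℕ → I) (x : ℕ → I) (j : ℕ) : I :=
  if j < m then r j else x (j - m)

lemma getD_range_map {α : Type*} (g : ℕ → α) {n k : ℕ} (d : α) (h : k < n) :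
    ((List.range n).map g).getD k d = g k := by
  rw [List.getD_eq_getElem?_getD, List.getElem?_map, List.getElem?_range h]
  rfl


lemma getD_histInput {I O : Type*} (π : ℕ → I × O) (n k : ℕ) (inp : I) (hk : k ≤ n + 1)
    (hinp : inp = (π (n + 1)).1) :
    ((hist π n).map Prod.fst ++ [inp]).getD k inp = (π k).1 := by
  have hmap : (hist π n).map Prod.fst = (List.range (n + 1)).map (fun j => (π j).1) := by
    simp [hist, List.map_map]
  have hlen : ((hist π n).map Prod.fst).length = n + 1 := by simp [hist]
  rcases Nat.lt_or_ge k (n + 1) with h | h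
  · rw [List.getD_append _ _ _ _ (by omega), hmap, getD_range_map _ _ h]
  · have hk' : k = n + 1 := by omega
    subst hk'
    have hsome : ((hist π n).map Prod.fst ++ [inp])[(n + 1 : ℕ)]? = some inp := by
      conv_lhs => rw [show (n + 1) = ((hist π n).map Prod.fst).length from hlen.symm]
      exact List.getElem?_concat_length
    rw [List.getD_eq_getElem?_getD, hsome]
    simp [hinp]

/-- In a separated weak Büchi game, the system's winning region is a union of SCCs
of the product game graph. -/
theorem winning_region_union_of_sccs {I O : Type*} [Fintype I] [Fintype O]
    (EI : I → I → Prop) (EO : O → O → Prop) (acc : I × O → Prop)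
    (hUnion : ∀ s t, SameSCC (prodEdge EI EO) s t → (acc s ↔ acc t))
    (hProj : ∀ s t, sccProjI EI EO s = sccProjI EI EO t →
      sccProjO EI EO s = sccProjO EI EO t → (acc s ↔ acc t))
    (i ih : I) (o oh : O)
    (hSCC : SameSCC (prodEdge EI EO) (i, o) (ih, oh))
    (hwin : SysWins EI EO acc (i, o)) :
    SysWins EI EO acc (ih, oh) := by
  classical
  obtain ⟨f, hf⟩ := hwin
  obtain ⟨m, ρ, hρ0, hρm, hρE⟩ := pathN_of_reach hSCC.1
  obtain ⟨m', q, hq0, hqm', hqE⟩ := pathN_of_reach hSCC.2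
  set f' : Strat I O := fun h inp =>
    if h.length < m' then (q h.length).2
    else (simPlay f o (dseq m (fun j => (ρ j).1)
          (fun k => ((h.map Prod.fst ++ [inp]).getD k inp))) (h.length - m')).2 with hf'
  refine ⟨f', ?_⟩
  intro π hcons henv
  set D : ℕ → I := dseq m (fun j => (ρ j).1) (fun n => (π n).1) with hD
  set σ : ℕ → I × O := simPlay f o D with hσ
  have hπ0 : π 0 = (ih, oh) := hcons.1
  have hDlt : ∀ j, j < m → D j = (ρ j).1 := by
    intro j hj; rw [hD]; simp [dseq, hj]
  have hDge : ∀ j, m ≤ j → D j = (π (j - m)).1 := by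
    intro j hj; rw [hD]; simp [dseq, Nat.not_lt.mpr hj]
  have hDm : ∀ j, j ≤ m → D j = (ρ j).1 := by
    intro j hj
    rcases lt_or_eq_of_le hj with h | h
    · exact hDlt j h
    · subst h; rw [hDge j le_rfl, Nat.sub_self, hπ0, hρm]
  have hD0 : D 0 = i := by rw [hDm 0 (Nat.zero_le m), hρ0]
  -- the simulated play σ is consistent with f from (i, o)
  have hσcons : Consistent f (i, o) σ := by
    have h := simPlay_consistent (f := f) (o0 := o) (x := D)
    rw [hD0] at h
    exact h
  have hσfst : ∀ n, (σ n).1 = D n := fun n => simPlay_fst n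
  have hσ0 : σ 0 = (D 0, o) := simPlay_zero
  have hσenv : EnvLegal EI σ := by
    intro n
    rw [hσfst n, hσfst (n + 1)]
    rcases Nat.lt_or_ge n m with h | h
    · rw [hDm n (le_of_lt h), hDm (n + 1) h]
      exact (hρE n h).1
    · rw [hDge n h, hDge (n + 1) (by omega)]
      have h2 := henv (n - m)
      have heq : n + 1 - m = n - m + 1 := by omega
      rw [heq]
      exact h2
  obtain ⟨hσsys, hσinf⟩ := hf σ hσcons hσenv
  -- unfolding the real play: outputs follow q then the simulation with lag m'
  have hQ : ∀ n, (π n).2 = if n < m' then (q n).2 else (σ (n - m')).2 := by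
    intro n
    cases n with
    | zero =>
      rcases Nat.eq_zero_or_pos m' with h | h
      · subst h
        rw [if_neg (lt_irrefl 0)]
        have hts : (ih, oh) = (i, o) := by rw [← hq0, hqm']
        rw [hπ0, Nat.sub_zero, hσ0]
        show oh = o
        exact congrArg Prod.snd hts
      · rw [if_pos h, hπ0, hq0]
    | succ n =>
      have hcn := hcons.2 n
      rw [hcn]
      show f' (hist π n) ((π (n + 1)).1) = _
      rw [hf']
      simp only [hist_length]
      by_cases hm' : n + 1 < m'
      · rw [if_pos hm', if_pos hm']
      · rw [if_neg hm', if_neg hm']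
        have hagree : ∀ k ≤ n + 1 - m',
            (dseq m (fun j => (ρ j).1)
              (fun k => (((hist π n).map Prod.fst ++ [(π (n + 1)).1]).getD k ((π (n + 1)).1)))) k
            = D k := by
          intro j hj
          by_cases hjm : j < m
          · rw [hD]; simp [dseq, hjm]
          · rw [hD]
            simp only [dseq, if_neg hjm]
            exact getD_histInput π n (j - m) _ (by omega) rfl
        rw [hσ]
        rw [simPlay_congr hagree]
  -- the real play has legal system moves
  have hπsys : SysLegal EO π := by
    intro n
    rw [hQ n, hQ (n + 1)]
    by_cases h1 : n + 1 < m'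
    · rw [if_pos (by omega : n < m'), if_pos h1]
      exact (hqE n (by omega)).2
    · rw [if_neg h1]
      by_cases h2 : n < m'
      · have hm : n + 1 = m' := by omega
        rw [if_pos h2]
        have h3 : (σ (n + 1 - m')).2 = (q (n + 1)).2 := by
          rw [show n + 1 - m' = 0 from by omega, hσ0, hm, hqm']
        rw [h3]
        exact (hqE n (by omega)).2
      · rw [if_neg h2]
        have h4 := hσsys (n - m')
        rw [show n + 1 - m' = (n - m') + 1 from by omega]
        exact h4
  refine ⟨hπsys, ?_⟩
  -- now the Büchi condition, via the SCC-projection argument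
  have hchain : ∀ j j', j ≤ j' → Reach EI (π j).1 (π j').1 := fun j j' h =>
    reach_of_chain (g := fun n => (π n).1) henv h
  obtain ⟨⟨v, u⟩, hy⟩ := exists_persistent_fiber (fun k => (σ k, π (k + m')))
    {k | m ≤ k ∧ acc (σ k)} (by
      intro N
      obtain ⟨k, hk1, hk2⟩ := hσinf (max N m)
      exact ⟨k, le_trans (le_max_left _ _) hk1, le_trans (le_max_right _ _) hk1, hk2⟩)
  obtain ⟨k0, -, hk0S, hF0⟩ := hy 0
  obtain ⟨hk0m, hk0acc⟩ := hk0S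
  obtain ⟨k1, hk1ge, hk1S, hF1⟩ := hy (k0 + m + m' + 1)
  obtain ⟨hk1m, -⟩ := hk1S
  have hσk0 : σ k0 = v := congrArg Prod.fst hF0
  have hπk0 : π (k0 + m') = u := congrArg Prod.snd hF0
  have hσk1 : σ k1 = v := congrArg Prod.fst hF1
  have hπk1 : π (k1 + m') = u := congrArg Prod.snd hF1
  -- the two states share their output component
  have hub : u.2 = v.2 := by
    rw [← hπk0, ← hσk0, hQ (k0 + m'), if_neg (by omega : ¬ k0 + m' < m'),
      Nat.add_sub_cancel]
  -- product cycles at v and u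
  have hc : 0 < k1 - k0 := by omega
  have cycv : PathN (prodEdge EI EO) (k1 - k0) v v := by
    refine ⟨fun j => σ (k0 + j), ?_, ?_, ?_⟩
    · show σ (k0 + 0) = v; rw [Nat.add_zero]; exact hσk0
    · show σ (k0 + (k1 - k0)) = v
      rw [show k0 + (k1 - k0) = k1 from by omega]; exact hσk1
    · intro j hj; exact ⟨hσenv (k0 + j), hσsys (k0 + j)⟩
  have cycu : PathN (prodEdge EI EO) (k1 - k0) u u := by
    refine ⟨fun j => π (k0 + m' + j), ?_, ?_, ?_⟩
    · show π (k0 + m' + 0) = u; rw [Nat.add_zero]; exact hπk0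
    · show π (k0 + m' + (k1 - k0)) = u
      rw [show k0 + m' + (k1 - k0) = k1 + m' from by omega]; exact hπk1
    · intro j hj; exact ⟨henv (k0 + m' + j), hπsys (k0 + m' + j)⟩
  -- the input components are mutually reachable
  have hva : v.1 = (π (k0 - m)).1 := by
    rw [← hσk0, hσfst k0, hDge k0 hk0m]
  have hva' : v.1 = (π (k1 - m)).1 := by
    rw [← hσk1, hσfst k1, hDge k1 hk1m]
  have hua : u.1 = (π (k0 + m')).1 := by rw [← hπk0]
  have r1 : Reach EI v.1 u.1 := by
    rw [hva, hua]; exact hchain _ _ (by omega)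
  have r2 : Reach EI u.1 v.1 := by
    rw [hva', hua]; exact hchain _ _ (by omega)
  -- equal SCC projections
  have hI : sccProjI EI EO v = sccProjI EI EO u := by
    rw [sccProjI_eq hc cycv, sccProjI_eq hc cycu]
    ext a'
    constructor
    · rintro ⟨h1, h2⟩
      exact ⟨Relation.ReflTransGen.trans r2 h1, Relation.ReflTransGen.trans h2 r1⟩
    · rintro ⟨h1, h2⟩
      exact ⟨Relation.ReflTransGen.trans r1 h1, Relation.ReflTransGen.trans h2 r2⟩
  have hO : sccProjO EI EO v = sccProjO EI EO u := by
    rw [sccProjO_eq hc cycv, sccProjO_eq hc cycu, hub]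
  have haccv : acc v := hσk0 ▸ hk0acc
  have haccu : acc u := (hProj v u hI hO).mp haccv
  intro N
  obtain ⟨k, hkN, -, hFk⟩ := hy N
  refine ⟨k + m', by omega, ?_⟩
  rw [show π (k + m') = u from congrArg Prod.snd hFk]
  exact haccu
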